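/- Let C be cyclic of order 2^n, n ≥ 3, and S_⊛(C) = { x ∈ V(F_2 C) : x = x^⊛ } the group of ⊛-symmetric normalized units. Then |S_⊛(C)| = 2^{2^{n-1}} and |S_⊛(C)[2]| = 2^{2^{n-2}+1}. -/

import Mathlib

open MonoidAlgebra Finset

noncomputable section

/-- The cyclic group of order `2^n`, written multiplicatively. -/
abbrev Cgrp (n : ℕ) : Type := Multiplicative (ZMod (2 ^ n))

/-- The group algebra `F₂C` of the cyclic group of order `2^n` over the field of two elements. -/
abbrev FC (n : ℕ) : Type := MonoidAlgebra (ZMod 2) (Cgrp n)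

/-- The augmentation map `χ : F₂C → F₂`. -/
def aug (n : ℕ) : FC n →ₐ[ZMod 2] ZMod 2 :=
  MonoidAlgebra.lift (ZMod 2) (ZMod 2) (Cgrp n) 1

/-- The generator `a` of the cyclic group `C`. -/
def agen (n : ℕ) : Cgrp n := Multiplicative.ofAdd (1 : ZMod (2 ^ n))

/-- The generator `a` viewed inside the group algebra `F₂C`. -/
def A (n : ℕ) : FC n := MonoidAlgebra.of (ZMod 2) (Cgrp n) (agen n)

/-- Group elements of `C` as elements of the group algebra. -/
def Gel (n : ℕ) (i : ZMod (2 ^ n)) : FC n :=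
  MonoidAlgebra.of (ZMod 2) (Cgrp n) (Multiplicative.ofAdd i)

/-- The involution `*` of `F₂C` induced by `a ↦ a⁻¹`. -/
def starOne (n : ℕ) : FC n ≃ₐ[ZMod 2] FC n :=
  MonoidAlgebra.domCongr (ZMod 2) (ZMod 2) (MulEquiv.inv (Cgrp n))

/-- The scalar `2^(n-1) - 1` in `ZMod (2^n)`. -/
def cf (n : ℕ) : ZMod (2 ^ n) := 2 ^ (n - 1) - 1

lemma two_pow_zmod (n : ℕ) : ((2 : ZMod (2 ^ n))) ^ n = 0 := by
  have h : ((2 ^ n : ℕ) : ZMod (2 ^ n)) = 0 := ZMod.natCast_self _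
  push_cast at h
  exact h

lemma cf_sq (n : ℕ) (hn : 2 ≤ n) : cf n * cf n = 1 := by
  have h0 := two_pow_zmod n
  have e1 : (2 : ZMod (2 ^ n)) ^ (n - 1) * 2 ^ (n - 1) = 0 := by
    rw [← pow_add]
    have h : n - 1 + (n - 1) = n + (n - 2) := by omega
    rw [h, pow_add, h0, zero_mul]
  have e2 : (2 : ZMod (2 ^ n)) * 2 ^ (n - 1) = 0 := by
    have h : (2 : ZMod (2 ^ n)) * 2 ^ (n - 1) = 2 ^ (n - 1 + 1) := (pow_succ' 2 (n-1)).symm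
    rw [h]
    have h' : n - 1 + 1 = n := by omega
    rw [h', h0]
  have key : cf n * cf n = 2 ^ (n - 1) * 2 ^ (n - 1) - 2 * 2 ^ (n - 1) + 1 := by
    unfold cf; ring
  rw [key, e1, e2]; ring

/-- The automorphism `z ↦ (2^(n-1)-1)·z` of `ZMod (2^n)`. -/
def thetaAdd (n : ℕ) (hn : 2 ≤ n) : ZMod (2 ^ n) ≃+ ZMod (2 ^ n) where
  toFun z := cf n * z
  invFun z := cf n * z
  left_inv z := by show cf n * (cf n * z) = z; rw [← mul_assoc, cf_sq n hn, one_mul]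
  right_inv z := by show cf n * (cf n * z) = z; rw [← mul_assoc, cf_sq n hn, one_mul]
  map_add' x y := mul_add _ _ _

/-- The automorphism `a ↦ a^(2^(n-1)-1)` of `C`. -/
def theta (n : ℕ) (hn : 2 ≤ n) : Cgrp n ≃* Cgrp n :=
  AddEquiv.toMultiplicative (thetaAdd n hn)

/-- The involution `⊛` of `F₂C` induced by `a ↦ a^(2^(n-1)-1)`. -/
def starTwo (n : ℕ) (hn : 2 ≤ n) : FC n ≃ₐ[ZMod 2] FC n :=
  MonoidAlgebra.domCongr (ZMod 2) (ZMod 2) (theta n hn)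

/-- The group `V(F₂C)` of normalized units, as a subgroup of the unit group of `F₂C`. -/
def Vgrp (n : ℕ) : Subgroup (FC n)ˣ where
  carrier := {u | aug n (↑u : FC n) = 1}
  one_mem' := by simp [Set.mem_setOf_eq]
  mul_mem' := by
    intro u v hu hv
    simp only [Set.mem_setOf_eq, Units.val_mul, map_mul] at *
    rw [hu, hv, one_mul]
  inv_mem' := by
    intro u hu
    simp only [Set.mem_setOf_eq] at *
    have h : aug n ((↑u : FC n) * (↑u⁻¹ : FC n)) = 1 := by
      rw [Units.mul_inv, map_one]
    rw [map_mul, hu, one_mul] at h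
    exact h

/-- The sum `Ĉ` of all elements of `C` inside the group algebra. -/
def hatC (n : ℕ) : FC n := ∑ g : Cgrp n, MonoidAlgebra.of (ZMod 2) (Cgrp n) g

/-- The sum `Ĉ²` of all elements of the subgroup `C²` of squares. -/
def hatCsq (n : ℕ) : FC n :=
  ∑ g ∈ Finset.image (fun h : Cgrp n => h * h) Finset.univ,
    MonoidAlgebra.of (ZMod 2) (Cgrp n) g

/-- The subspace `F₂C²` of `F₂C` spanned by the subgroup of squares. -/
def sqSpan (n : ℕ) : Submodule (ZMod 2) (FC n) :=
  Submodule.span (ZMod 2) (Set.range fun g : Cgrp n => MonoidAlgebra.of (ZMod 2) (Cgrp n) (g * g))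

lemma hatC_mul_hatC (n : ℕ) (hn : 1 ≤ n) : hatC n * hatC n = 0 := by
  classical
  unfold hatC
  rw [Finset.sum_mul_sum]
  have h1 : ∀ g : Cgrp n,
      ∑ h : Cgrp n, MonoidAlgebra.of (ZMod 2) (Cgrp n) g * MonoidAlgebra.of (ZMod 2) (Cgrp n) h
        = hatC n := by
    intro g
    have h2 : ∀ h : Cgrp n,
        MonoidAlgebra.of (ZMod 2) (Cgrp n) g * MonoidAlgebra.of (ZMod 2) (Cgrp n) h
          = MonoidAlgebra.of (ZMod 2) (Cgrp n) (g * h) := by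
      intro h; rw [map_mul]
    unfold hatC
    calc ∑ h : Cgrp n, MonoidAlgebra.of (ZMod 2) (Cgrp n) g * MonoidAlgebra.of (ZMod 2) (Cgrp n) h
        = ∑ h : Cgrp n, MonoidAlgebra.of (ZMod 2) (Cgrp n) (g * h) := by
          exact Finset.sum_congr rfl fun h _ => h2 h
      _ = ∑ h : Cgrp n, MonoidAlgebra.of (ZMod 2) (Cgrp n) h :=
          Fintype.sum_equiv (Equiv.mulLeft g) _ _ (fun h => rfl)
  calc (∑ g : Cgrp n, ∑ h : Cgrp n,
        MonoidAlgebra.of (ZMod 2) (Cgrp n) g * MonoidAlgebra.of (ZMod 2) (Cgrp n) h)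
      = ∑ _g : Cgrp n, hatC n := Finset.sum_congr rfl fun g _ => h1 g
    _ = (Fintype.card (Cgrp n)) • hatC n := by rw [Finset.sum_const, Finset.card_univ]
    _ = 0 := by
        rw [← Nat.cast_smul_eq_nsmul (ZMod 2)]
        have hc : ((Fintype.card (Cgrp n) : ℕ) : ZMod 2) = 0 := by
          have : Fintype.card (Cgrp n) = 2 ^ n := by simp [Cgrp, ZMod.card]
          rw [this]
          push_cast
          rw [show ((2:ZMod 2) = 0) from rfl, zero_pow (by omega)]
        rw [hc, zero_smul]

lemma add_self_FC (n : ℕ) (x : FC n) : x + x = 0 := by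
  rw [← two_smul (ZMod 2) x, show ((2:ZMod 2) = 0) from rfl, zero_smul]

/-- `1 + Ĉ` as a unit of `F₂C` (it is its own inverse). -/
def uC (n : ℕ) (hn : 1 ≤ n) : (FC n)ˣ :=
  ⟨1 + hatC n, 1 + hatC n, by
    have h : (1 + hatC n) * (1 + hatC n) = 1 + (hatC n + hatC n) + hatC n * hatC n := by ring
    rw [h, add_self_FC, hatC_mul_hatC n hn, add_zero, add_zero], by
    have h : (1 + hatC n) * (1 + hatC n) = 1 + (hatC n + hatC n) + hatC n * hatC n := by ring
    rw [h, add_self_FC, hatC_mul_hatC n hn, add_zero, add_zero]⟩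



-- ===== auxiliary lemmas =====

/-- Factoring functions through a surjection. -/
def factorEquiv {X Y F : Type*} (ρ : X → Y) (hρ : Function.Surjective ρ) :
    {c : X → F // ∀ x x', ρ x = ρ x' → c x = c x'} ≃ (Y → F) where
  toFun c y := c.1 (Function.surjInv hρ y)
  invFun e := ⟨e ∘ ρ, fun x x' h => by simp only [Function.comp_apply, h]⟩
  left_inv c := by
    apply Subtype.ext
    funext x
    exact c.2 _ _ (Function.surjInv_eq hρ (ρ x))
  right_inv e := funext fun y => congrArg e (Function.surjInv_eq hρ y)

lemma nat_double_cases (m v k : ℕ) (hv : v < 2*m) (h : 2*v = (2*m)*k) :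
    v = 0 ∨ v = m := by
  have hk : k ≤ 1 := by
    by_contra h2
    push_neg at h2
    have : 2*m*2 ≤ 2*m*k := Nat.mul_le_mul_left _ h2
    omega
  interval_cases k <;> omega

lemma nat_double_cases' (p v k : ℕ) (hv : v < 4*p) (h : 2*v = (4*p)*k + 2*p) :
    v = p ∨ v = 3*p := by
  have hk : k ≤ 1 := by
    by_contra h2
    push_neg at h2
    have : 4*p*2 ≤ 4*p*k := Nat.mul_le_mul_left _ h2
    omega
  interval_cases k <;> omega

section ZModFacts

variable (n : ℕ)

instance : NeZero (2^n) := ⟨by positivity⟩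

lemma Mcast : ((2^(n-1) : ℕ) : ZMod (2^n)) = (2:ZMod (2^n))^(n-1) := by push_cast; ring

lemma hM0 (hn : 1 ≤ n) : (2:ZMod (2^n))^(n-1) ≠ 0 := by
  rw [← Mcast, Ne, ZMod.natCast_eq_zero_iff]
  intro h
  exact absurd (Nat.le_of_dvd (by positivity) h) (by
    have : 2^(n-1) < 2^n := Nat.pow_lt_pow_right (by norm_num) (by omega)
    omega)

lemma hMM (hn : 1 ≤ n) : (2:ZMod (2^n))^(n-1) + 2^(n-1) = 0 := by
  have h0 : ((2*2^(n-1) : ℕ) : ZMod (2^n)) = 0 := by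
    rw [show 2 * 2^(n-1) = 2^n by rw [← pow_succ']; congr 1; omega, ZMod.natCast_self]
  push_cast at h0
  linear_combination h0

lemma two_mul_eq_zero_iff (hn : 1 ≤ n) (z : ZMod (2^n)) :
    2*z = 0 ↔ z = 0 ∨ z = 2^(n-1) := by
  constructor
  · intro h
    have hz : ((z.val : ℕ) : ZMod (2^n)) = z := ZMod.natCast_zmod_val z
    have h2 : ((2 * z.val : ℕ) : ZMod (2^n)) = 0 := by push_cast [hz]; exact h
    rw [ZMod.natCast_eq_zero_iff] at h2
    obtain ⟨k, hk⟩ := h2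
    have hpow : (2:ℕ)^n = 2*2^(n-1) := by
      rw [← pow_succ']; congr 1; omega
    have hv : z.val < 2*2^(n-1) := by rw [← hpow]; exact ZMod.val_lt z
    rcases nat_double_cases (2^(n-1)) z.val k hv (by rw [← hpow]; omega) with h1 | h1
    · left; rw [← hz, h1]; simp
    · right; rw [← hz, h1, Mcast]
  · rintro (rfl | rfl)
    · ring
    · have h0 : ((2 * 2^(n-1) : ℕ) : ZMod (2^n)) = 0 := by
        rw [show 2 * 2^(n-1) = 2^n by rw [← pow_succ']; congr 1; omega, ZMod.natCast_self]
      push_cast at h0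
      rw [← Mcast]; push_cast; exact h0

lemma two_mul_eq_M_iff (hn : 2 ≤ n) (z : ZMod (2^n)) :
    2*z = 2^(n-1) ↔ z = 2^(n-2) ∨ z = 2^(n-2) + 2^(n-1) := by
  have key : (2:ZMod (2^n)) * 2^(n-2) = 2^(n-1) := by
    have h := congrArg (Nat.cast : ℕ → ZMod (2^n))
      (show 2*2^(n-2) = 2^(n-1) from by
        calc 2*2^(n-2) = 2^((n-2)+1) := by rw [pow_succ]; ring
        _ = 2^(n-1) := by congr 1; omega)
    push_cast at h
    exact h
  constructor
  · intro h
    have hz : ((z.val : ℕ) : ZMod (2^n)) = z := ZMod.natCast_zmod_val z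
    have h2 : ((2 * z.val : ℕ) : ZMod (2^n)) = ((2^(n-1) : ℕ) : ZMod (2^n)) := by
      push_cast [hz]; rw [h]
    rw [ZMod.natCast_eq_natCast_iff] at h2
    have hmod : 2 * z.val % 2^n = 2^(n-1) := by
      have := h2
      unfold Nat.ModEq at this
      rw [this, Nat.mod_eq_of_lt (Nat.pow_lt_pow_right (by norm_num) (by omega))]
    have hdm := Nat.div_add_mod (2*z.val) (2^n)
    have h4p : (2:ℕ)^n = 4 * 2^(n-2) := by
      calc (2:ℕ)^n = 2^((n-2)+2) := by congr 1; omega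
      _ = 4*2^(n-2) := by rw [pow_add]; ring
    have h2p : (2:ℕ)^(n-1) = 2 * 2^(n-2) := by
      calc (2:ℕ)^(n-1) = 2^((n-2)+1) := by congr 1; omega
      _ = 2*2^(n-2) := by rw [pow_succ]; ring
    have hv : z.val < 4 * 2^(n-2) := by rw [← h4p]; exact ZMod.val_lt z
    rcases nat_double_cases' (2^(n-2)) z.val (2*z.val / 2^n) hv
      (by rw [← h2p, ← h4p]; omega) with h1 | h1
    · left
      rw [← hz, h1]; push_cast; ring
    · right
      rw [← hz, h1]; push_cast
      linear_combination key
  · rintro (rfl | rfl)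
    · exact key
    · rw [mul_add, key]
      have := hMM n (by omega)
      linear_combination this

end ZModFacts

section Theta

variable (n : ℕ)

lemma two_mul_Q (hn : 2 ≤ n) : (2:ZMod (2^n)) * 2^(n-2) = 2^(n-1) := by
  have h := congrArg (Nat.cast : ℕ → ZMod (2^n))
    (show 2*2^(n-2) = 2^(n-1) from by
      calc 2*2^(n-2) = 2^((n-2)+1) := by rw [pow_succ]; ring
      _ = 2^(n-1) := by congr 1; omega)
  push_cast at h
  exact h

lemma cf_mul_self (hn : 2 ≤ n) (z : ZMod (2^n)) : cf n * (cf n * z) = z := by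
  rw [← mul_assoc, cf_sq n hn, one_mul]

lemma theta_or (hn : 1 ≤ n) (z : ZMod (2^n)) :
    cf n * z = -z ∨ cf n * z = -z + 2^(n-1) := by
  have h2 : 2 * ((2:ZMod (2^n))^(n-1) * z) = 0 := by
    linear_combination z * hMM n hn
  rcases (two_mul_eq_zero_iff n hn _).mp h2 with h | h
  · left; unfold cf; linear_combination h
  · right; unfold cf; linear_combination h

lemma cf_fix_iff (hn : 3 ≤ n) (z : ZMod (2^n)) : cf n * z = z ↔ 2*z = 0 := by
  have kk := two_mul_Q n (by omega)
  constructor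
  · intro h
    unfold cf at h
    have hcast : ((2^(n-2)-1 : ℕ) : ZMod (2^n)) = 2^(n-2) - 1 := by
      have h1 : (1:ℕ) ≤ 2^(n-2) := Nat.one_le_two_pow
      push_cast [Nat.cast_sub h1]
      ring
    have hu : IsUnit ((2^(n-2)-1 : ℕ) : ZMod (2^n)) := by
      rw [ZMod.isUnit_iff_coprime]
      apply Nat.Coprime.pow_right
      have heven : Even ((2:ℕ)^(n-2)) := by
        refine ⟨2^(n-3), ?_⟩
        calc (2:ℕ)^(n-2) = 2^((n-3)+1) := by congr 1; omega
        _ = 2^(n-3) + 2^(n-3) := by rw [pow_succ]; ring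
      have hodd : Odd ((2:ℕ)^(n-2) - 1) := Nat.Even.sub_odd Nat.one_le_two_pow heven odd_one
      rwa [Nat.coprime_two_right]
    have h0 : ((2^(n-2)-1:ℕ) : ZMod (2^n)) * (2*z) = ((2^(n-2)-1:ℕ) : ZMod (2^n)) * 0 := by
      rw [hcast, mul_zero]
      linear_combination h + z*kk
    exact hu.mul_left_cancel h0
  · intro h
    unfold cf
    linear_combination (2^(n-2) - 1 : ZMod (2^n))*h - z*kk

lemma cf_M (hn : 2 ≤ n) : cf n * 2^(n-1) = 2^(n-1) := by
  have hB2 : (2:ZMod (2^n))^(n-1) * 2^(n-1) = 0 := by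
    have h : ((2^(n-1)*2^(n-1) : ℕ) : ZMod (2^n)) = 0 := by
      rw [ZMod.natCast_eq_zero_iff, ← pow_add]
      exact pow_dvd_pow 2 (by omega)
    push_cast at h
    exact h
  unfold cf
  linear_combination hB2 - hMM n (by omega)

end Theta

section Orbits

variable (n : ℕ)

/-- The `⊛`-orbit of `z`. -/
def o2 (z : ZMod (2^n)) : Finset (ZMod (2^n)) := {z, cf n * z}

/-- The Klein-four orbit of `z`. -/
def o4 (z : ZMod (2^n)) : Finset (ZMod (2^n)) :=
  {z, -z, z + 2^(n-1), -z + 2^(n-1)}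

lemma self_mem_o2 (z : ZMod (2^n)) : z ∈ o2 n z := by simp [o2]

lemma o2_eq_of_mem (hn : 2 ≤ n) {z u : ZMod (2^n)} (h : u ∈ o2 n z) :
    o2 n u = o2 n z := by
  rcases by simpa [o2] using h with rfl | rfl
  · rfl
  · show ({cf n * z, cf n * (cf n * z)} : Finset _) = {z, cf n * z}
    rw [cf_mul_self n hn]
    exact Finset.pair_comm _ _

lemma fiber_o2 (hn : 2 ≤ n) (z0 : ZMod (2^n)) :
    Finset.univ.filter (fun z => o2 n z = o2 n z0) = o2 n z0 := by
  ext u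
  simp only [Finset.mem_filter, Finset.mem_univ, true_and]
  constructor
  · intro h
    rw [← h]
    exact self_mem_o2 n u
  · exact o2_eq_of_mem n hn

lemma mem_o4 (hn : 3 ≤ n) (z u : ZMod (2^n)) :
    u ∈ o4 n z ↔ 2*(u-z) = 0 ∨ 2*(u+z) = 0 := by
  rw [two_mul_eq_zero_iff n (by omega), two_mul_eq_zero_iff n (by omega)]
  simp only [o4, Finset.mem_insert, Finset.mem_singleton]
  constructor
  · rintro (rfl | rfl | rfl | rfl)
    · exact Or.inl (Or.inl (by ring))
    · exact Or.inr (Or.inl (by ring))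
    · exact Or.inl (Or.inr (by ring))
    · exact Or.inr (Or.inr (by ring))
  · rintro ((h|h)|(h|h))
    · exact Or.inl (by linear_combination h)
    · exact Or.inr (Or.inr (Or.inl (by linear_combination h)))
    · exact Or.inr (Or.inl (by linear_combination h))
    · exact Or.inr (Or.inr (Or.inr (by linear_combination h)))

lemma self_mem_o4 (hn : 3 ≤ n) (z : ZMod (2^n)) : z ∈ o4 n z := by
  simp [o4]

lemma o4_eq_of_mem (hn : 3 ≤ n) {z u : ZMod (2^n)} (h : u ∈ o4 n z) :
    o4 n u = o4 n z := by
  rw [mem_o4 n hn] at h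
  ext w
  rw [mem_o4 n hn, mem_o4 n hn]
  rcases h with h | h <;> constructor <;> rintro (h1|h1)
  · exact Or.inl (by linear_combination h1 + h)
  · exact Or.inr (by linear_combination h1 - h)
  · exact Or.inl (by linear_combination h1 - h)
  · exact Or.inr (by linear_combination h1 + h)
  · exact Or.inr (by linear_combination h1 + h)
  · exact Or.inl (by linear_combination h1 - h)
  · exact Or.inr (by linear_combination h1 + h)
  · exact Or.inl (by linear_combination h1 - h)

lemma fiber_o4 (hn : 3 ≤ n) (z0 : ZMod (2^n)) :
    Finset.univ.filter (fun z => o4 n z = o4 n z0) = o4 n z0 := by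
  ext u
  simp only [Finset.mem_filter, Finset.mem_univ, true_and]
  constructor
  · intro h
    rw [← h]
    exact self_mem_o4 n hn u
  · exact o4_eq_of_mem n hn

lemma o2_zero : o2 n 0 = {0} := by
  ext u; simp [o2]

lemma o2_M (hn : 2 ≤ n) : o2 n (2^(n-1)) = {(2:ZMod (2^n))^(n-1)} := by
  ext u; simp [o2, cf_M n hn]

lemma card_image_o2 (hn : 3 ≤ n) :
    ((Finset.univ : Finset (ZMod (2^n))).image (o2 n)).card = 2^(n-1) + 1 := by
  classical
  set I := (Finset.univ : Finset (ZMod (2^n))).image (o2 n) with hI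
  have hcardZ : Fintype.card (ZMod (2^n)) = 2^n := ZMod.card _
  have hsum : ∑ s ∈ I, s.card = 2^n := by
    have h1 : (Finset.univ : Finset (ZMod (2^n))).card
        = ∑ s ∈ I, (Finset.univ.filter (fun z => o2 n z = s)).card :=
      Finset.card_eq_sum_card_fiberwise (fun x _ => Finset.mem_image_of_mem _ (Finset.mem_univ x))
    have h2 : ∀ s ∈ I, (Finset.univ.filter (fun z => o2 n z = s)).card = s.card := by
      intro s hs
      obtain ⟨z0, _, rfl⟩ := Finset.mem_image.mp hs
      rw [fiber_o2 n (by omega)]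
    calc ∑ s ∈ I, s.card = ∑ s ∈ I, (Finset.univ.filter (fun z => o2 n z = s)).card :=
          (Finset.sum_congr rfl h2).symm
      _ = (Finset.univ : Finset (ZMod (2^n))).card := h1.symm
      _ = 2^n := by rw [Finset.card_univ, hcardZ]
  have hdich : ∀ s ∈ I, s.card = 1 ∨ s.card = 2 := by
    intro s hs
    obtain ⟨z0, _, rfl⟩ := Finset.mem_image.mp hs
    by_cases h : cf n * z0 = z0
    · left; simp [o2, h]
    · right
      show ({z0, cf n * z0} : Finset _).card = 2
      rw [Finset.card_pair (fun hh => h hh.symm)]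
  have hM0' : (2:ZMod (2^n))^(n-1) ≠ 0 := hM0 n (by omega)
  have hsing : I.filter (fun s => s.card = 1) = {({0} : Finset (ZMod (2^n))), {(2:ZMod (2^n))^(n-1)}} := by
    ext s
    simp only [Finset.mem_filter, hI, Finset.mem_image, Finset.mem_univ, true_and,
      Finset.mem_insert, Finset.mem_singleton]
    constructor
    · rintro ⟨⟨z0, rfl⟩, hcard⟩
      have hfix : cf n * z0 = z0 := by
        by_contra hne
        have : ({z0, cf n * z0} : Finset _).card = 2 :=
          Finset.card_pair (fun hh => hne hh.symm)
        rw [show ({z0, cf n * z0} : Finset _) = o2 n z0 from rfl] at this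
        omega
      rcases (two_mul_eq_zero_iff n (by omega) z0).mp ((cf_fix_iff n hn z0).mp hfix) with rfl | rfl
      · left; exact o2_zero n
      · right; exact o2_M n (by omega)
    · rintro (rfl | rfl)
      · exact ⟨⟨0, o2_zero n⟩, by simp⟩
      · exact ⟨⟨2^(n-1), o2_M n (by omega)⟩, by simp⟩
  have hsingcard : (I.filter (fun s => s.card = 1)).card = 2 := by
    rw [hsing]
    rw [Finset.card_pair]
    intro hh
    exact hM0' (by simpa using (Finset.singleton_injective hh).symm)
  have hsplit := Finset.sum_filter_add_sum_filter_not I (fun s => s.card = 1) (fun s => s.card)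
  have hfc := Finset.card_filter_add_card_filter_not (s := I) (p := fun s => s.card = 1)
  have hs1 : ∑ s ∈ I.filter (fun s => s.card = 1), s.card
      = (I.filter (fun s => s.card = 1)).card := by
    rw [Finset.card_eq_sum_ones]
    exact Finset.sum_congr rfl (fun s hs => (Finset.mem_filter.mp hs).2)
  have hs2 : ∑ s ∈ I.filter (fun s => ¬ s.card = 1), s.card
      = 2 * (I.filter (fun s => ¬ s.card = 1)).card := by
    have h2 : ∀ s ∈ I.filter (fun s => ¬ s.card = 1), s.card = 2 := by
      intro s hs
      have hm := Finset.mem_filter.mp hs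
      rcases hdich s hm.1 with h | h
      · exact absurd h hm.2
      · exact h
    rw [Finset.sum_congr rfl h2, Finset.sum_const, smul_eq_mul, mul_comm]
  have hp : (2:ℕ)^n = 2*2^(n-1) := by rw [← pow_succ']; congr 1; omega
  omega

lemma o4_zero (hn : 3 ≤ n) : o4 n 0 = {0, (2:ZMod (2^n))^(n-1)} := by
  ext u; simp [o4]

lemma o4_Q (hn : 3 ≤ n) : o4 n (2^(n-2)) = {(2:ZMod (2^n))^(n-2), 2^(n-2) + 2^(n-1)} := by
  have h2Q := two_mul_Q n (by omega)
  have hMM' := hMM n (by omega)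
  have e1 : -(2:ZMod (2^n))^(n-2) = 2^(n-2) + 2^(n-1) := by linear_combination -h2Q - hMM'
  have e2 : -(2:ZMod (2^n))^(n-2) + 2^(n-1) = 2^(n-2) := by linear_combination -h2Q
  have e3 : (2:ZMod (2^n))^(n-2) + 2^(n-1) + 2^(n-1) = 2^(n-2) := by linear_combination hMM'
  ext u; simp [o4, e1, e2, e3]; tauto

lemma o4_card4 (hn : 3 ≤ n) (z : ZMod (2^n)) (h0 : 2*z ≠ 0) (hM : 2*z ≠ 2^(n-1)) :
    (o4 n z).card = 4 := by
  have hM0' : (2:ZMod (2^n))^(n-1) ≠ 0 := hM0 n (by omega)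
  have hMM' := hMM n (by omega)
  have d1 : z ≠ -z := fun h => h0 (by linear_combination h)
  have d2 : z ≠ z + 2^(n-1) := fun h => hM0' (by linear_combination -h)
  have d3 : z ≠ -z + 2^(n-1) := fun h => hM (by linear_combination h)
  have d4 : -z ≠ z + 2^(n-1) := fun h => hM (by linear_combination -h - hMM')
  have d5 : -z ≠ -z + 2^(n-1) := fun h => hM0' (by linear_combination -h)
  have d6 : z + 2^(n-1) ≠ -z + 2^(n-1) := fun h => h0 (by linear_combination h)
  show ({z, -z, z + 2^(n-1), -z + 2^(n-1)} : Finset _).card = 4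
  rw [Finset.card_insert_of_notMem (by
      simp only [Finset.mem_insert, Finset.mem_singleton]; push_neg; exact ⟨d1, d2, d3⟩),
    Finset.card_insert_of_notMem (by
      simp only [Finset.mem_insert, Finset.mem_singleton]; push_neg; exact ⟨d4, d5⟩),
    Finset.card_pair d6]

lemma card_image_o4 (hn : 3 ≤ n) :
    ((Finset.univ : Finset (ZMod (2^n))).image (o4 n)).card = 2^(n-2) + 1 := by
  classical
  have hM0' : (2:ZMod (2^n))^(n-1) ≠ 0 := hM0 n (by omega)
  have h2Q := two_mul_Q n (by omega)
  have hMM' := hMM n (by omega)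
  set I := (Finset.univ : Finset (ZMod (2^n))).image (o4 n) with hI
  have hcardZ : Fintype.card (ZMod (2^n)) = 2^n := ZMod.card _
  have hsum : ∑ s ∈ I, s.card = 2^n := by
    have h1 : (Finset.univ : Finset (ZMod (2^n))).card
        = ∑ s ∈ I, (Finset.univ.filter (fun z => o4 n z = s)).card :=
      Finset.card_eq_sum_card_fiberwise (fun x _ => Finset.mem_image_of_mem _ (Finset.mem_univ x))
    have h2 : ∀ s ∈ I, (Finset.univ.filter (fun z => o4 n z = s)).card = s.card := by
      intro s hs
      obtain ⟨z0, _, rfl⟩ := Finset.mem_image.mp hs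
      rw [fiber_o4 n hn]
    calc ∑ s ∈ I, s.card = ∑ s ∈ I, (Finset.univ.filter (fun z => o4 n z = s)).card :=
          (Finset.sum_congr rfl h2).symm
      _ = (Finset.univ : Finset (ZMod (2^n))).card := h1.symm
      _ = 2^n := by rw [Finset.card_univ, hcardZ]
  have hzero : ∀ z : ZMod (2^n), 2*z = 0 → o4 n z = o4 n 0 := by
    intro z hz
    apply o4_eq_of_mem n hn
    rw [mem_o4 n hn]
    left; linear_combination hz
  have hQmem : ∀ z : ZMod (2^n), 2*z = 2^(n-1) → o4 n z = o4 n (2^(n-2)) := by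
    intro z hz
    apply o4_eq_of_mem n hn
    rw [mem_o4 n hn]
    left; linear_combination hz - h2Q
  have hcard0 : (o4 n 0).card = 2 := by
    rw [o4_zero n hn]
    exact Finset.card_pair (fun h => hM0' h.symm)
  have hcardQ : (o4 n (2^(n-2))).card = 2 := by
    rw [o4_Q n hn]
    refine Finset.card_pair (fun h => hM0' ?_)
    linear_combination -h
  have hne0Q : o4 n 0 ≠ o4 n (2^(n-2)) := by
    intro h
    have h0 : (0 : ZMod (2^n)) ∈ o4 n (2^(n-2)) := by
      rw [← h, o4_zero n hn]; simp
    rw [o4_Q n hn] at h0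
    simp only [Finset.mem_insert, Finset.mem_singleton] at h0
    rcases h0 with h0 | h0
    · exact hM0' (by linear_combination -h2Q - 2*h0)
    · exact hM0' (by linear_combination -2*h0 - h2Q - hMM')
  have hdich : ∀ s ∈ I, s.card = 2 ∨ s.card = 4 := by
    intro s hs
    obtain ⟨z0, _, rfl⟩ := Finset.mem_image.mp hs
    by_cases h0 : 2*z0 = 0
    · left; rw [hzero z0 h0]; exact hcard0
    · by_cases hq : 2*z0 = 2^(n-1)
      · left; rw [hQmem z0 hq]; exact hcardQ
      · right; exact o4_card4 n hn z0 h0 hq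
  have hsing : I.filter (fun s => s.card = 2) = {o4 n 0, o4 n (2^(n-2))} := by
    ext s
    simp only [Finset.mem_filter, hI, Finset.mem_image, Finset.mem_univ, true_and,
      Finset.mem_insert, Finset.mem_singleton]
    constructor
    · rintro ⟨⟨z0, rfl⟩, hcard⟩
      by_cases h0 : 2*z0 = 0
      · left; exact hzero z0 h0
      · by_cases hq : 2*z0 = 2^(n-1)
        · right; exact hQmem z0 hq
        · rw [o4_card4 n hn z0 h0 hq] at hcard; omega
    · rintro (rfl | rfl)
      · exact ⟨⟨0, rfl⟩, hcard0⟩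
      · exact ⟨⟨2^(n-2), rfl⟩, hcardQ⟩
  have hsingcard : (I.filter (fun s => s.card = 2)).card = 2 := by
    rw [hsing]
    exact Finset.card_pair hne0Q
  have hsplit := Finset.sum_filter_add_sum_filter_not I (fun s => s.card = 2) (fun s => s.card)
  have hfc := Finset.card_filter_add_card_filter_not (s := I) (p := fun s => s.card = 2)
  have hs1 : ∑ s ∈ I.filter (fun s => s.card = 2), s.card
      = 2 * (I.filter (fun s => s.card = 2)).card := by
    have h2 : ∀ s ∈ I.filter (fun s => s.card = 2), s.card = 2 :=
      fun s hs => (Finset.mem_filter.mp hs).2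
    rw [Finset.sum_congr rfl h2, Finset.sum_const, smul_eq_mul, mul_comm]
  have hs2 : ∑ s ∈ I.filter (fun s => ¬ s.card = 2), s.card
      = 4 * (I.filter (fun s => ¬ s.card = 2)).card := by
    have h2 : ∀ s ∈ I.filter (fun s => ¬ s.card = 2), s.card = 4 := by
      intro s hs
      have hm := Finset.mem_filter.mp hs
      rcases hdich s hm.1 with h | h
      · exact absurd h hm.2
      · exact h
    rw [Finset.sum_congr rfl h2, Finset.sum_const, smul_eq_mul, mul_comm]
  have hp : (2:ℕ)^n = 4*2^(n-2) := by
    calc (2:ℕ)^n = 2^((n-2)+2) := by congr 1; omega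
    _ = 4*2^(n-2) := by rw [pow_add]; ring
  omega

end Orbits

section Counting

variable (n : ℕ)

lemma card_inv_theta (hn : 3 ≤ n) :
    Nat.card {c : ZMod (2^n) → ZMod 2 // ∀ z, c (cf n * z) = c z}
      = 2^(2^(n-1)+1) := by
  classical
  set I := (Finset.univ : Finset (ZMod (2^n))).image (o2 n) with hI
  have hmem : ∀ z : ZMod (2^n), o2 n z ∈ I :=
    fun z => Finset.mem_image_of_mem _ (Finset.mem_univ z)
  set ρ : ZMod (2^n) → {s // s ∈ I} := fun z => ⟨o2 n z, hmem z⟩ with hρdef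
  have hρ : Function.Surjective ρ := by
    rintro ⟨s, hs⟩
    obtain ⟨z0, _, rfl⟩ := Finset.mem_image.mp hs
    exact ⟨z0, rfl⟩
  have hiff : ∀ c : ZMod (2^n) → ZMod 2,
      (∀ z, c (cf n * z) = c z) ↔ (∀ x x', ρ x = ρ x' → c x = c x') := by
    intro c
    constructor
    · intro h x x' he
      have he' : o2 n x = o2 n x' := congrArg Subtype.val he
      have hx' : x' ∈ o2 n x := by rw [he']; exact self_mem_o2 n x'
      rcases by simpa [o2] using hx' with rfl | rfl
      · rfl
      · exact (h x).symm
    · intro h z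
      refine h _ _ (Subtype.ext ?_)
      exact o2_eq_of_mem n (by omega) (by simp [o2])
  have := Nat.card_congr ((Equiv.subtypeEquivRight hiff).trans (factorEquiv ρ hρ))
  rw [this, Nat.card_fun, Nat.card_eq_fintype_card (α := {s // s ∈ I}), Fintype.card_coe,
    Nat.card_zmod, card_image_o2 n hn]

lemma card_inv_klein (hn : 3 ≤ n) :
    Nat.card {c : ZMod (2^n) → ZMod 2 //
      (∀ z, c (cf n * z) = c z) ∧ (∀ z, c (z + 2^(n-1)) = c z)}
      = 2^(2^(n-2)+1) := by
  classical
  have hMM' := hMM n (by omega)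
  set I := (Finset.univ : Finset (ZMod (2^n))).image (o4 n) with hI
  have hmem : ∀ z : ZMod (2^n), o4 n z ∈ I :=
    fun z => Finset.mem_image_of_mem _ (Finset.mem_univ z)
  set ρ : ZMod (2^n) → {s // s ∈ I} := fun z => ⟨o4 n z, hmem z⟩ with hρdef
  have hρ : Function.Surjective ρ := by
    rintro ⟨s, hs⟩
    obtain ⟨z0, _, rfl⟩ := Finset.mem_image.mp hs
    exact ⟨z0, rfl⟩
  have hiff : ∀ c : ZMod (2^n) → ZMod 2,
      ((∀ z, c (cf n * z) = c z) ∧ (∀ z, c (z + 2^(n-1)) = c z))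
        ↔ (∀ x x', ρ x = ρ x' → c x = c x') := by
    intro c
    constructor
    · rintro ⟨hθ, hτ⟩ x x' he
      have hneg : ∀ z : ZMod (2^n), c (-z) = c z := by
        intro z
        rcases theta_or n (by omega) z with h | h
        · rw [← h]; exact hθ z
        · have h1 := hτ (-z)
          rw [← h1, ← h, hθ z]
      have he' : o4 n x = o4 n x' := congrArg Subtype.val he
      have hx' : x' ∈ o4 n x := by rw [he']; exact self_mem_o4 n hn x'
      rcases by simpa [o4] using hx' with rfl | rfl | rfl | rfl
      · rfl
      · exact (hneg x).symm
      · exact (hτ x).symm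
      · rw [hτ (-x), hneg x]
    · intro h
      constructor
      · intro z
        refine h _ _ (Subtype.ext ?_)
        apply o4_eq_of_mem n hn
        rw [mem_o4 n hn]
        right
        unfold cf
        linear_combination z * hMM'
      · intro z
        refine h _ _ (Subtype.ext ?_)
        apply o4_eq_of_mem n hn
        rw [mem_o4 n hn]
        left
        linear_combination hMM'
  have := Nat.card_congr ((Equiv.subtypeEquivRight hiff).trans (factorEquiv ρ hρ))
  rw [this, Nat.card_fun, Nat.card_eq_fintype_card (α := {s // s ∈ I}), Fintype.card_coe,
    Nat.card_zmod, card_image_o4 n hn]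

lemma card_inv_theta_sum0 (hn : 3 ≤ n) :
    Nat.card {c : ZMod (2^n) → ZMod 2 //
      ((∑ z, c z) = 0) ∧ ∀ z, c (cf n * z) = c z} = 2^(2^(n-1)) := by
  classical
  have htwo : ∀ a : ZMod 2, a + a = 0 := by decide
  set δ : ZMod (2^n) → ZMod 2 := fun z => if z = 0 then 1 else 0 with hδ
  have hδinv : ∀ z, δ (cf n * z) = δ z := by
    intro z
    by_cases hz : z = 0
    · subst hz; simp [hδ]
    · have : cf n * z ≠ 0 := by
        intro h
        apply hz
        have := cf_mul_self n (by omega) z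
        rw [h, mul_zero] at this
        exact this.symm
      simp [hδ, hz, this]
  have hδsum : ∑ z, δ z = 1 := by
    rw [hδ]
    rw [Finset.sum_ite_eq' Finset.univ (0 : ZMod (2^n)) (fun _ => (1 : ZMod 2))]
    simp
  set E : {c : ZMod (2^n) → ZMod 2 // ∀ z, c (cf n * z) = c z}
      ≃ {c : ZMod (2^n) → ZMod 2 // ((∑ z, c z) = 0) ∧ ∀ z, c (cf n * z) = c z} × ZMod 2 := {
    toFun := fun c => (⟨fun z => c.1 z + (∑ w, c.1 w) * δ z, by
        constructor
        · show (∑ z, (c.1 z + (∑ w, c.1 w) * δ z)) = 0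
          rw [Finset.sum_add_distrib, ← Finset.mul_sum, hδsum, mul_one]
          exact htwo _
        · intro z
          show c.1 (cf n * z) + (∑ w, c.1 w) * δ (cf n * z)
            = c.1 z + (∑ w, c.1 w) * δ z
          rw [c.2 z, hδinv z]⟩, ∑ w, c.1 w)
    invFun := fun p => ⟨fun z => p.1.1 z + p.2 * δ z, by
        intro z
        show p.1.1 (cf n * z) + p.2 * δ (cf n * z) = p.1.1 z + p.2 * δ z
        rw [p.1.2.2 z, hδinv z]⟩
    left_inv := fun c => by
      apply Subtype.ext
      funext z
      show (c.1 z + (∑ w, c.1 w) * δ z) + (∑ w, c.1 w) * δ z = c.1 z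
      rw [add_assoc, htwo, add_zero]
    right_inv := fun p => by
      have hsum : ∑ w, (p.1.1 w + p.2 * δ w) = p.2 := by
        rw [Finset.sum_add_distrib, ← Finset.mul_sum, hδsum, mul_one, p.1.2.1, zero_add]
      ext
      · show (p.1.1 _ + p.2 * δ _) + (∑ w, (p.1.1 w + p.2 * δ w)) * δ _ = p.1.1 _
        rw [hsum, add_assoc, htwo, add_zero]
      · exact hsum }
  have hc := Nat.card_congr E
  rw [card_inv_theta n hn, Nat.card_prod, Nat.card_zmod] at hc
  have : 2^(2^(n-1)+1) = 2^(2^(n-1)) * 2 := by rw [pow_succ]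
  rw [this] at hc
  exact (Nat.eq_of_mul_eq_mul_right (by norm_num) hc.symm)

end Counting

section Algebra

variable (n : ℕ)

lemma aug_eq_sum (x : FC n) : aug n x = ∑ g : Cgrp n, x.coeff g := by
  rw [aug, MonoidAlgebra.lift_apply]
  rw [Finsupp.sum]
  rw [Finset.sum_subset (Finset.subset_univ x.coeff.support)]
  · simp
  · intro g _ hg
    simp [Finsupp.notMem_support_iff.mp hg]

lemma charp_FC : CharP (FC n) 2 := by
  have hinj : Function.Injective (MonoidAlgebra.singleOneRingHom :
      ZMod 2 →+* MonoidAlgebra (ZMod 2) (Cgrp n)) := by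
    intro a b h
    have := congrArg (fun v => (v : MonoidAlgebra (ZMod 2) (Cgrp n)).coeff (1 : Cgrp n)) h
    simpa [MonoidAlgebra.singleOneRingHom] using this
  exact charP_of_injective_ringHom hinj 2

lemma FC_eq_sum_single (x : FC n) :
    x = ∑ g : Cgrp n, MonoidAlgebra.single g (x.coeff g) := by
  conv_lhs => rw [← MonoidAlgebra.sum_coeff_single x]
  rw [Finsupp.sum]
  exact Finset.sum_subset (Finset.subset_univ _)
    (fun g _ hg => by rw [Finsupp.notMem_support_iff.mp hg]; simp)

lemma mul_self_coeff (x : FC n) :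
    x * x = ∑ g : Cgrp n, MonoidAlgebra.single (g * g) (x.coeff g) := by
  haveI := charp_FC n
  have h2 : ∀ a : ZMod 2, a^2 = a := by decide
  conv_lhs => rw [← sq, FC_eq_sum_single n x]
  rw [sum_pow_char]
  refine Finset.sum_congr rfl (fun g _ => ?_)
  rw [MonoidAlgebra.single_pow, h2, sq]

lemma zmod2_pow_pow (a : ZMod 2) (k : ℕ) : a^(2^k) = a := by
  induction k with
  | zero => simp
  | succ k ih =>
    have h2 : ∀ b : ZMod 2, b^2 = b := by decide
    rw [pow_succ, pow_mul, ih, h2]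

lemma pow_card_FC (x : FC n) :
    x ^ (2^n) = MonoidAlgebra.single 1 (aug n x) := by
  haveI := charp_FC n
  conv_lhs => rw [FC_eq_sum_single n x]
  rw [sum_pow_char_pow]
  rw [aug_eq_sum n x]
  have hcard : Fintype.card (Cgrp n) = 2 ^ n := by simp [Cgrp, ZMod.card]
  have h1 : ∀ g : Cgrp n, (MonoidAlgebra.single g (x.coeff g))^(2^n)
      = MonoidAlgebra.single 1 (x.coeff g) := by
    intro g
    rw [MonoidAlgebra.single_pow, zmod2_pow_pow]
    congr 1
    calc g ^ (2^n) = g ^ Fintype.card (Cgrp n) := by rw [hcard]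
    _ = 1 := pow_card_eq_one
  rw [Finset.sum_congr rfl (fun g _ => h1 g)]
  exact (map_sum (MonoidAlgebra.singleAddHom (1 : Cgrp n)) _ _).symm

/-- Any element of augmentation value `1` is a unit. -/
def unitOfAug (x : FC n) (hx : aug n x = 1) : (FC n)ˣ where
  val := x
  inv := x ^ (2^n - 1)
  val_inv := by
    rw [← pow_succ']
    rw [show 2^n - 1 + 1 = 2^n from by have := Nat.one_le_two_pow (n := n); omega]
    rw [pow_card_FC n x, hx]
    rfl
  inv_val := by
    rw [← pow_succ]
    rw [show 2^n - 1 + 1 = 2^n from by have := Nat.one_le_two_pow (n := n); omega]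
    rw [pow_card_FC n x, hx]
    rfl

@[simp] lemma unitOfAug_coe (x : FC n) (hx : aug n x = 1) :
    ((unitOfAug n x hx : (FC n)ˣ) : FC n) = x := rfl

lemma theta_symm_apply (hn : 2 ≤ n) (g : Cgrp n) :
    (theta n hn).symm g = Multiplicative.ofAdd (cf n * g.toAdd) := by
  rw [MulEquiv.symm_apply_eq]
  symm
  show Multiplicative.ofAdd (cf n * (cf n * g.toAdd)) = g
  rw [cf_mul_self n hn]
  rfl

lemma star_iff (hn : 2 ≤ n) (x : FC n) :
    x = starTwo n hn x
      ↔ ∀ z : ZMod (2^n), x.coeff (Multiplicative.ofAdd (cf n * z)) = x.coeff (Multiplicative.ofAdd z) := by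
  constructor
  · intro h z
    have := congrArg (fun v : FC n => v.coeff (Multiplicative.ofAdd z)) h
    simp only [starTwo, MonoidAlgebra.coeff_domCongr] at this
    rw [theta_symm_apply n hn] at this
    exact this.symm
  · intro h
    ext g
    show x.coeff g = (starTwo n hn x).coeff g
    rw [starTwo, MonoidAlgebra.coeff_domCongr, theta_symm_apply n hn]
    exact (h g.toAdd).symm

lemma mul_mul_filter (hn : 3 ≤ n) (g0 : Cgrp n) :
    Finset.univ.filter (fun g : Cgrp n => g*g = g0*g0)
      = {g0, g0 * Multiplicative.ofAdd ((2:ZMod (2^n))^(n-1))} := by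
  ext g
  simp only [Finset.mem_filter, Finset.mem_univ, true_and, Finset.mem_insert,
    Finset.mem_singleton]
  constructor
  · intro h
    have h' : g.toAdd + g.toAdd = g0.toAdd + g0.toAdd := congrArg Multiplicative.toAdd h
    have h2 : 2*(g.toAdd - g0.toAdd) = 0 := by linear_combination h'
    rcases (two_mul_eq_zero_iff n (by omega) _).mp h2 with h3 | h3
    · left
      apply Multiplicative.toAdd.injective
      linear_combination h3
    · right
      apply Multiplicative.toAdd.injective
      show g.toAdd = g0.toAdd + 2^(n-1)
      linear_combination h3
  · rintro (rfl | rfl)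
    · rfl
    · apply Multiplicative.toAdd.injective
      show (g0.toAdd + 2^(n-1)) + (g0.toAdd + 2^(n-1)) = g0.toAdd + g0.toAdd
      linear_combination hMM n (by omega)

lemma mul_self_zero_iff (hn : 3 ≤ n) (y : FC n) :
    y * y = 0
      ↔ ∀ z : ZMod (2^n),
          y.coeff (Multiplicative.ofAdd (z + 2^(n-1))) = y.coeff (Multiplicative.ofAdd z) := by
  have hM0' : (2:ZMod (2^n))^(n-1) ≠ 0 := hM0 n (by omega)
  have hne : ∀ g0 : Cgrp n, g0 ≠ g0 * Multiplicative.ofAdd ((2:ZMod (2^n))^(n-1)) := by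
    intro g0 h
    apply hM0'
    have h' : g0.toAdd = g0.toAdd + 2^(n-1) := congrArg Multiplicative.toAdd h
    linear_combination -h'
  have hab : ∀ a b : ZMod 2, a + b = 0 → b = a := by decide
  have heval : ∀ w : Cgrp n,
      (∑ g : Cgrp n, MonoidAlgebra.single (g*g) (y.coeff g)).coeff w
        = ∑ g ∈ Finset.univ.filter (fun g : Cgrp n => g*g = w), y.coeff g := by
    intro w
    rw [Finset.sum_filter, MonoidAlgebra.coeff_sum, Finsupp.finset_sum_apply]
    refine Finset.sum_congr rfl (fun g _ => ?_)
    exact Finsupp.single_apply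
  rw [mul_self_coeff n y]
  constructor
  · intro h z
    have happ := congrArg
      (fun v : FC n => v.coeff ((Multiplicative.ofAdd z) * (Multiplicative.ofAdd z))) h
    simp only [MonoidAlgebra.coeff_zero, Finsupp.coe_zero, Pi.zero_apply] at happ
    rw [heval, mul_mul_filter n hn (Multiplicative.ofAdd z),
      Finset.sum_pair (hne (Multiplicative.ofAdd z))] at happ
    exact hab _ _ happ
  · intro h
    ext w
    rw [heval]
    show (∑ g ∈ Finset.univ.filter (fun g : Cgrp n => g*g = w), y.coeff g) = (0 : FC n).coeff w
    rw [MonoidAlgebra.coeff_zero, Finsupp.coe_zero, Pi.zero_apply]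
    by_cases hex : ∃ g0 : Cgrp n, g0 * g0 = w
    · obtain ⟨g0, rfl⟩ := hex
      rw [mul_mul_filter n hn g0, Finset.sum_pair (hne g0)]
      have := h g0.toAdd
      have hg0 : Multiplicative.ofAdd g0.toAdd = g0 := rfl
      rw [hg0] at this
      rw [show g0 * Multiplicative.ofAdd ((2:ZMod (2^n))^(n-1))
          = Multiplicative.ofAdd (g0.toAdd + 2^(n-1)) from rfl, this]
      have h2 : ∀ a : ZMod 2, a + a = 0 := by decide
      exact h2 _
    · rw [Finset.filter_eq_empty_iff.mpr (by
        intro g _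
        exact fun hg => hex ⟨g, hg⟩), Finset.sum_empty]

end Algebra

section Assembly

variable (n : ℕ)

/-- The group of `⊛`-symmetric normalized units. -/
def Sgrp (hn : 2 ≤ n) : Subgroup (FC n)ˣ where
  carrier := {u | aug n (↑u : FC n) = 1 ∧ (↑u : FC n) = starTwo n hn (↑u : FC n)}
  one_mem' := by
    constructor
    · rw [Units.val_one, map_one]
    · rw [Units.val_one, map_one]
  mul_mem' := by
    rintro u v ⟨hu1, hu2⟩ ⟨hv1, hv2⟩
    constructor
    · rw [Units.val_mul, map_mul, hu1, hv1, one_mul]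
    · rw [Units.val_mul, map_mul, ← hu2, ← hv2]
  inv_mem' := by
    rintro u ⟨hu1, hu2⟩
    have huv : (↑u : FC n) * (↑u⁻¹ : FC n) = 1 := u.mul_inv
    constructor
    · have h := congrArg (aug n) huv
      rw [map_mul, hu1, one_mul, map_one] at h
      exact h
    · have h2 := congrArg (starTwo n hn) huv
      rw [map_mul, map_one, ← hu2] at h2
      calc (↑u⁻¹ : FC n)
          = (↑u⁻¹ : FC n) * ((↑u : FC n) * starTwo n hn (↑u⁻¹ : FC n)) := by
            rw [h2, mul_one]
        _ = ((↑u⁻¹ : FC n) * (↑u : FC n)) * starTwo n hn (↑u⁻¹ : FC n) := by ring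
        _ = starTwo n hn (↑u⁻¹ : FC n) := by rw [u.inv_mul, one_mul]

/-- Coefficient functions. -/
def Psi : FC n ≃ (ZMod (2^n) → ZMod 2) :=
  (MonoidAlgebra.coeffEquiv.trans (Finsupp.equivFunOnFinite (α := Cgrp n) (M := ZMod 2))).trans
    (Equiv.arrowCongr Multiplicative.toAdd (Equiv.refl (ZMod 2)))

lemma Psi_apply (x : FC n) (z : ZMod (2^n)) :
    Psi n x z = x.coeff (Multiplicative.ofAdd z) := rfl

lemma aug_eq_psi_sum (x : FC n) : aug n x = ∑ z : ZMod (2^n), Psi n x z := by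
  rw [aug_eq_sum n x]
  exact (Fintype.sum_equiv (Multiplicative.ofAdd)
    (fun z => Psi n x z) (fun g => x.coeff g) (fun z => rfl)).symm

def SE1 (hn : 2 ≤ n) : ↥(Sgrp n hn) ≃
    {x : FC n // aug n x = 1 ∧ x = starTwo n hn x} where
  toFun u := ⟨((u : (FC n)ˣ) : FC n), u.2⟩
  invFun x := ⟨unitOfAug n x.1 x.2.1, x.2⟩
  left_inv u := Subtype.ext (Units.ext rfl)
  right_inv x := Subtype.ext rfl

def SE2 (hn : 2 ≤ n) :
    {x : FC n // aug n x = 1 ∧ x = starTwo n hn x}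
      ≃ {y : FC n // aug n y = 0 ∧ y = starTwo n hn y} where
  toFun x := ⟨x.1 + 1, by
    obtain ⟨h1, h2⟩ := x.2
    constructor
    · rw [map_add, map_one, h1]; decide
    · rw [map_add, map_one, ← h2]⟩
  invFun y := ⟨y.1 + 1, by
    obtain ⟨h1, h2⟩ := y.2
    constructor
    · rw [map_add, map_one, h1]; decide
    · rw [map_add, map_one, ← h2]⟩
  left_inv x := by
    apply Subtype.ext
    show x.1 + 1 + 1 = x.1
    rw [add_assoc, add_self_FC n 1, add_zero]
  right_inv y := by
    apply Subtype.ext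
    show y.1 + 1 + 1 = y.1
    rw [add_assoc, add_self_FC n 1, add_zero]

def SE3 (hn : 2 ≤ n) :
    {y : FC n // aug n y = 0 ∧ y = starTwo n hn y}
      ≃ {c : ZMod (2^n) → ZMod 2 //
          ((∑ z, c z) = 0) ∧ ∀ z, c (cf n * z) = c z} := by
  refine Equiv.subtypeEquiv (Psi n) (fun y => ?_)
  rw [aug_eq_psi_sum n y, star_iff n hn y]
  simp only [Psi_apply]

lemma card_Sgrp (hn : 3 ≤ n) :
    Nat.card (Sgrp n (Nat.le_of_succ_le hn : 2 ≤ n)) = 2^(2^(n-1)) := by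
  rw [Nat.card_congr (((SE1 n (by omega)).trans (SE2 n (by omega))).trans (SE3 n (by omega)))]
  exact card_inv_theta_sum0 n hn

def SE1' (hn : 3 ≤ n) :
    {x : ↥(Sgrp n (Nat.le_of_succ_le hn : 2 ≤ n)) // x * x = 1}
      ≃ {x : FC n // x = starTwo n (Nat.le_of_succ_le hn : 2 ≤ n) x ∧ x * x = 1} where
  toFun p := ⟨((p.1 : (FC n)ˣ) : FC n), p.1.2.2, by
    have h := congrArg (fun q : ↥(Sgrp n (Nat.le_of_succ_le hn : 2 ≤ n)) => ((q : (FC n)ˣ) : FC n)) p.2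
    exact h⟩
  invFun x := ⟨⟨unitOfAug n x.1 (by
      have h := congrArg (aug n) x.2.2
      rw [map_mul, map_one] at h
      have : ∀ a : ZMod 2, a * a = 1 → a = 1 := by decide
      exact this _ h), by
    constructor
    · show aug n x.1 = 1
      have h := congrArg (aug n) x.2.2
      rw [map_mul, map_one] at h
      have : ∀ a : ZMod 2, a * a = 1 → a = 1 := by decide
      exact this _ h
    · exact x.2.1⟩, by
    apply Subtype.ext
    apply Units.ext
    exact x.2.2⟩
  left_inv p := Subtype.ext (Subtype.ext (Units.ext rfl))
  right_inv x := Subtype.ext rfl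

def SE2' (hn : 3 ≤ n) :
    {x : FC n // x = starTwo n (Nat.le_of_succ_le hn : 2 ≤ n) x ∧ x * x = 1}
      ≃ {y : FC n // y = starTwo n (Nat.le_of_succ_le hn : 2 ≤ n) y ∧ y * y = 0} where
  toFun x := ⟨x.1 + 1, by
    obtain ⟨h1, h2⟩ := x.2
    constructor
    · rw [map_add, map_one, ← h1]
    · have e : (x.1 + 1) * (x.1 + 1) = x.1*x.1 + (x.1 + x.1) + 1 := by ring
      rw [e, h2, add_self_FC n x.1, add_zero, add_self_FC n 1]⟩
  invFun y := ⟨y.1 + 1, by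
    obtain ⟨h1, h2⟩ := y.2
    constructor
    · rw [map_add, map_one, ← h1]
    · have e : (y.1 + 1) * (y.1 + 1) = y.1*y.1 + (y.1 + y.1) + 1 := by ring
      rw [e, h2, add_self_FC n y.1, add_zero, zero_add]⟩
  left_inv x := by
    apply Subtype.ext
    show x.1 + 1 + 1 = x.1
    rw [add_assoc, add_self_FC n 1, add_zero]
  right_inv y := by
    apply Subtype.ext
    show y.1 + 1 + 1 = y.1
    rw [add_assoc, add_self_FC n 1, add_zero]

def SE3' (hn : 3 ≤ n) :
    {y : FC n // y = starTwo n (Nat.le_of_succ_le hn : 2 ≤ n) y ∧ y * y = 0}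
      ≃ {c : ZMod (2^n) → ZMod 2 //
          (∀ z, c (cf n * z) = c z) ∧ ∀ z, c (z + 2^(n-1)) = c z} := by
  refine Equiv.subtypeEquiv (Psi n) (fun y => ?_)
  rw [star_iff n (Nat.le_of_succ_le hn : 2 ≤ n) y, mul_self_zero_iff n hn y]
  simp only [Psi_apply]

lemma card_Sgrp2 (hn : 3 ≤ n) :
    Nat.card {x : ↥(Sgrp n (Nat.le_of_succ_le hn : 2 ≤ n)) // x * x = 1} = 2^(2^(n-2)+1) := by
  rw [Nat.card_congr (((SE1' n hn).trans (SE2' n hn)).trans (SE3' n hn))]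
  exact card_inv_klein n hn

end Assembly


/-- For `C` cyclic of order `2^n`, `n ≥ 3`, the group `S_⊛(C)` of `⊛`-symmetric normalized
units has order `2^(2^(n-1))`, and its subgroup of elements of order dividing two has order
`2^(2^(n-2)+1)`. -/
theorem stmt11 (n : ℕ) (hn : 3 ≤ n) :
    ∃ S : Subgroup (FC n)ˣ,
      (∀ u : (FC n)ˣ, u ∈ S ↔
        (aug n (↑u : FC n) = 1 ∧ (↑u : FC n) = starTwo n (by omega) (↑u : FC n))) ∧
      Nat.card S = 2 ^ (2 ^ (n - 1)) ∧
      Nat.card {x : S // x * x = 1} = 2 ^ (2 ^ (n - 2) + 1) := by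
  exact ⟨Sgrp n (by omega), fun u => Iff.rfl, card_Sgrp n hn, card_Sgrp2 n hn⟩

end
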